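/- Let A₁₁, A₁₂, A₂₁, A₂₂ be objects of a category with morphisms f₁, f₂ : A₁₁ → A₁₂, f'₁, f'₂ : A₁₁ → A₂₁, g₁, g₂ : A₂₁ → A₂₂, g'₁, g'₂ : A₁₂ → A₂₂ satisfying gᵢ ∘ f'ⱼ = g'ⱼ ∘ fᵢ for all i, j ∈ {1,2}, and suppose there exist s : A₁₂ → A₁₁ with f₁ ∘ s = f₂ ∘ s = id and s' : A₂₁ → A₁₁ with f'₁ ∘ s' = f'₂ ∘ s' = id. Then for any morphism x : A₂₂ → B, one has x ∘ g'₁ ∘ f₁ = x ∘ g'₂ ∘ f₂ if and only if both x ∘ g'₁ = x ∘ g'₂ and x ∘ g₁ = x ∘ g₂. -/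
import Mathlib

open CategoryTheory

universe v u

/-- Given the commuting data of the proposition in Lack's paper: a morphism
`x : A₂₂ ⟶ B` coequalizes `(g'₁ ∘ f₁, g'₂ ∘ f₂)` iff it coequalizes both `(g₁, g₂)`
and `(g'₁, g'₂)`. -/
theorem coequalizes_diagonal_iff
    {C : Type u} [Category.{v} C]
    {A₁₁ A₁₂ A₂₁ A₂₂ : C}
    (f₁ f₂ : A₁₁ ⟶ A₁₂) (f'₁ f'₂ : A₁₁ ⟶ A₂₁)
    (g₁ g₂ : A₂₁ ⟶ A₂₂) (g'₁ g'₂ : A₁₂ ⟶ A₂₂)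
    (w₁₁ : f'₁ ≫ g₁ = f₁ ≫ g'₁) (w₁₂ : f'₂ ≫ g₁ = f₁ ≫ g'₂)
    (w₂₁ : f'₁ ≫ g₂ = f₂ ≫ g'₁) (w₂₂ : f'₂ ≫ g₂ = f₂ ≫ g'₂)
    (s : A₁₂ ⟶ A₁₁) (hs₁ : s ≫ f₁ = 𝟙 A₁₂) (hs₂ : s ≫ f₂ = 𝟙 A₁₂)
    (s' : A₂₁ ⟶ A₁₁) (hs'₁ : s' ≫ f'₁ = 𝟙 A₂₁) (hs'₂ : s' ≫ f'₂ = 𝟙 A₂₁)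
    {B : C} (x : A₂₂ ⟶ B) :
    f₁ ≫ g'₁ ≫ x = f₂ ≫ g'₂ ≫ x ↔ (g'₁ ≫ x = g'₂ ≫ x ∧ g₁ ≫ x = g₂ ≫ x) := by
  constructor
  · intro h
    constructor
    · calc g'₁ ≫ x = (s ≫ f₁) ≫ g'₁ ≫ x := by rw [hs₁, Category.id_comp]
        _ = s ≫ f₁ ≫ g'₁ ≫ x := by simp
        _ = s ≫ f₂ ≫ g'₂ ≫ x := by rw [h]
        _ = (s ≫ f₂) ≫ g'₂ ≫ x := by simp
        _ = g'₂ ≫ x := by rw [hs₂, Category.id_comp]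
    · calc g₁ ≫ x = (s' ≫ f'₁) ≫ g₁ ≫ x := by rw [hs'₁, Category.id_comp]
        _ = s' ≫ (f'₁ ≫ g₁) ≫ x := by simp
        _ = s' ≫ f₁ ≫ g'₁ ≫ x := by rw [w₁₁]; simp
        _ = s' ≫ f₂ ≫ g'₂ ≫ x := by rw [h]
        _ = s' ≫ (f'₂ ≫ g₂) ≫ x := by rw [w₂₂]; simp
        _ = (s' ≫ f'₂) ≫ g₂ ≫ x := by simp
        _ = g₂ ≫ x := by rw [hs'₂, Category.id_comp]
  · rintro ⟨h', h⟩
    calc f₁ ≫ g'₁ ≫ x = f₁ ≫ g'₂ ≫ x := by rw [h']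
      _ = (f'₂ ≫ g₁) ≫ x := by rw [w₁₂]; simp
      _ = f'₂ ≫ g₂ ≫ x := by rw [← h]; simp
      _ = (f'₂ ≫ g₂) ≫ x := by simp
      _ = f₂ ≫ g'₂ ≫ x := by rw [w₂₂]; simp
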